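/- Let f be a C¹ function on ℝ∖{0} with compact support, such that f and x·f'(x) extend to bounded measurable functions near 0 (i.e. lim_{y→0⁺} f(y), lim_{y→0⁻} f(y), lim_{y→0⁺} y f'(y), lim_{y→0⁻} y f'(y) all exist). Then the Fourier transform F(f)(z) = ∫_ℝ f(x) e^{-ixz} dx extends to an entire function of z ∈ ℂ, and for all z ∈ ℂ, iz·F(f)(z) = ∫_ℝ f'(x)(e^{-ixz} − 1) dx. -/

import Mathlib

open MeasureTheory Real Filter Set

lemma aux_bdd_near {g : ℝ → ℂ}
    (h1 : ∃ L : ℂ, Tendsto g (nhdsWithin 0 (Set.Ioi 0)) (nhds L))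
    (h2 : ∃ L : ℂ, Tendsto g (nhdsWithin 0 (Set.Iio 0)) (nhds L)) :
    ∃ δ > (0:ℝ), ∃ C : ℝ, ∀ x : ℝ, x ≠ 0 → |x| < δ → ‖g x‖ ≤ C := by
  obtain ⟨L1, h1⟩ := h1
  obtain ⟨L2, h2⟩ := h2
  have e1 : ∀ᶠ y in nhdsWithin 0 (Set.Ioi 0), ‖g y‖ ≤ ‖L1‖ + 1 :=
    h1.norm.eventually (eventually_le_nhds (lt_add_one ‖L1‖))
  have e2 : ∀ᶠ y in nhdsWithin 0 (Set.Iio 0), ‖g y‖ ≤ ‖L2‖ + 1 :=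
    h2.norm.eventually (eventually_le_nhds (lt_add_one ‖L2‖))
  rw [eventually_nhdsWithin_iff, Metric.eventually_nhds_iff] at e1 e2
  obtain ⟨δ1, hδ1, he1⟩ := e1
  obtain ⟨δ2, hδ2, he2⟩ := e2
  refine ⟨min δ1 δ2, lt_min hδ1 hδ2, max (‖L1‖ + 1) (‖L2‖ + 1), fun x hx hxδ => ?_⟩
  rcases hx.lt_or_gt with hneg | hpos
  · have := he2 (by simpa [Real.dist_eq] using lt_of_lt_of_le hxδ (min_le_right _ _)) hneg
    exact this.trans (le_max_right _ _)
  · have := he1 (by simpa [Real.dist_eq] using lt_of_lt_of_le hxδ (min_le_left _ _)) hpos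
    exact this.trans (le_max_left _ _)

lemma aux_bdd_away {g : ℝ → ℂ} (hg : ContinuousOn g {(0:ℝ)}ᶜ)
    (hK : HasCompactSupport g) {δ : ℝ} (hδ : 0 < δ) :
    ∃ C : ℝ, 0 ≤ C ∧ ∀ x : ℝ, δ ≤ |x| → ‖g x‖ ≤ C := by
  have hcl : IsClosed {x : ℝ | δ ≤ |x|} := isClosed_le continuous_const continuous_abs
  have hKc : IsCompact (tsupport g ∩ {x : ℝ | δ ≤ |x|}) := hK.inter_right hcl
  have hsub : tsupport g ∩ {x : ℝ | δ ≤ |x|} ⊆ {(0:ℝ)}ᶜ := by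
    rintro x ⟨-, hx⟩
    simp only [Set.mem_compl_iff, Set.mem_singleton_iff]
    intro h; rw [h] at hx; simp at hx; linarith
  obtain ⟨C, hC⟩ := hKc.exists_bound_of_continuousOn (hg.mono hsub)
  refine ⟨max C 0, le_max_right _ _, fun x hx => ?_⟩
  by_cases hxs : x ∈ tsupport g
  · exact (hC x ⟨hxs, hx⟩).trans (le_max_left _ _)
  · rw [image_eq_zero_of_notMem_tsupport hxs]
    simp

lemma aux_bdd_global {g : ℝ → ℂ} (hg : ContinuousOn g {(0:ℝ)}ᶜ)
    (hK : HasCompactSupport g)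
    (h1 : ∃ L : ℂ, Tendsto g (nhdsWithin 0 (Set.Ioi 0)) (nhds L))
    (h2 : ∃ L : ℂ, Tendsto g (nhdsWithin 0 (Set.Iio 0)) (nhds L)) :
    ∃ C : ℝ, 0 ≤ C ∧ ∀ x : ℝ, x ≠ 0 → ‖g x‖ ≤ C := by
  obtain ⟨δ, hδ, C1, hC1⟩ := aux_bdd_near h1 h2
  obtain ⟨C2, hC2n, hC2⟩ := aux_bdd_away hg hK hδ
  refine ⟨max C1 C2, hC2n.trans (le_max_right _ _), fun x hx => ?_⟩
  rcases lt_or_ge |x| δ with h | h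
  · exact (hC1 x hx h).trans (le_max_left _ _)
  · exact (hC2 x h).trans (le_max_right _ _)

lemma aux_integrable {g : ℝ → ℂ} {A C : ℝ}
    (hm : AEStronglyMeasurable g volume)
    (hsupp : ∀ x : ℝ, A < |x| → g x = 0)
    (hC : ∀ x : ℝ, x ≠ 0 → ‖g x‖ ≤ C) :
    Integrable g := by
  have hind : Integrable (Set.indicator (Set.Icc (-A) A) (fun _ => C)) := by
    refine (IntegrableOn.integrable_indicator ?_ measurableSet_Icc)
    exact integrableOn_const measure_Icc_lt_top.ne
  refine hind.mono' hm ?_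
  have h0 : ∀ᵐ x : ℝ, x ≠ 0 := by
    rw [ae_iff]
    simpa using measure_singleton (0:ℝ)
  filter_upwards [h0] with x hx
  by_cases hxA : |x| ≤ A
  · rw [Set.indicator_of_mem (by rw [Set.mem_Icc, ← abs_le]; exact hxA)]
    exact hC x hx
  · rw [hsupp x (not_le.1 hxA), Set.indicator_of_notMem
      (by rw [Set.mem_Icc, ← abs_le]; exact hxA)]
    simp
theorem fourier_entire_and_iz_formula (f : ℝ → ℂ)
    (hf : ContDiffOn ℝ 1 f {(0:ℝ)}ᶜ) (hs : HasCompactSupport f)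
    (h1 : ∃ L : ℂ, Tendsto f (nhdsWithin 0 (Set.Ioi 0)) (nhds L))
    (h2 : ∃ L : ℂ, Tendsto f (nhdsWithin 0 (Set.Iio 0)) (nhds L))
    (h3 : ∃ L : ℂ, Tendsto (fun y : ℝ => (y:ℂ) * deriv f y) (nhdsWithin 0 (Set.Ioi 0)) (nhds L))
    (h4 : ∃ L : ℂ, Tendsto (fun y : ℝ => (y:ℂ) * deriv f y) (nhdsWithin 0 (Set.Iio 0)) (nhds L)) :
    Differentiable ℂ (fun z : ℂ => ∫ x : ℝ, f x * Complex.exp (-Complex.I * x * z)) ∧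
    ∀ z : ℂ, Complex.I * z * (∫ x : ℝ, f x * Complex.exp (-Complex.I * x * z)) =
      ∫ x : ℝ, deriv f x * (Complex.exp (-Complex.I * x * z) - 1) := by
  classical
  -- radius of support
  obtain ⟨r, hr⟩ := hs.isBounded.subset_closedBall 0
  set A : ℝ := max r 0 + 1 with hAdef
  have hA0 : (0:ℝ) < A := by positivity
  have hout : ∀ x : ℝ, A ≤ |x| → x ∉ tsupport f := by
    intro x hx hmem
    have := hr hmem
    rw [Metric.mem_closedBall, Real.dist_eq, sub_zero] at this
    have : |x| ≤ max r 0 := this.trans (le_max_left _ _)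
    simp only [hAdef] at hx
    linarith
  have hfA : ∀ x : ℝ, A ≤ |x| → f x = 0 := fun x hx =>
    image_eq_zero_of_notMem_tsupport (hout x hx)
  have hdA : ∀ x : ℝ, A ≤ |x| → deriv f x = 0 := by
    intro x hx
    by_contra h
    exact hout x hx (support_deriv_subset (Function.mem_support.2 h))
  -- measurability
  have hmf : AEStronglyMeasurable f volume := by
    have := hf.continuousOn.aestronglyMeasurable (μ := volume) (measurableSet_singleton (0:ℝ)).compl
    rwa [show (volume : Measure ℝ).restrict ({(0:ℝ)}ᶜ) = volume by simp] at this
  have hmd : AEStronglyMeasurable (deriv f) volume :=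
    (measurable_deriv f).aestronglyMeasurable
  have hcd : ContinuousOn (deriv f) {(0:ℝ)}ᶜ :=
    hf.continuousOn_deriv_of_isOpen isOpen_compl_singleton le_rfl
  -- bounds
  obtain ⟨Cf, hCf0, hCf⟩ := aux_bdd_global hf.continuousOn hs h1 h2
  have hcompxd : HasCompactSupport (fun x : ℝ => (x:ℂ) * deriv f x) := by
    exact hs.deriv.mul_left
  obtain ⟨Cd, hCd0, hCd⟩ := aux_bdd_global
    (Complex.continuous_ofReal.continuousOn.mul hcd) hcompxd h3 h4
  have hnorm : ∀ (z : ℂ) (x : ℝ), ‖Complex.exp (-Complex.I * x * z)‖ = Real.exp (x * z.im) := by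
    intro z x
    rw [Complex.norm_exp]
    congr 1
    simp [Complex.mul_re, Complex.mul_im]
  have hsupp_f : ∀ x : ℝ, f x ≠ 0 → |x| ≤ A := fun x h =>
    le_of_not_gt (fun hlt => h (hfA x hlt.le))
  have hcontinner : ∀ z : ℂ, Continuous (fun x : ℝ => -Complex.I * x * z) := fun z =>
    (continuous_const.mul Complex.continuous_ofReal).mul continuous_const
  -- integrability of f * exp
  have int1 : ∀ z : ℂ, Integrable (fun x : ℝ => f x * Complex.exp (-Complex.I * x * z)) := by
    intro z
    apply aux_integrable (A := A) (C := Cf * Real.exp (A * |z.im|))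
    · exact hmf.mul (Complex.continuous_exp.comp (hcontinner z)).aestronglyMeasurable
    · intro x hx; rw [hfA x hx.le, zero_mul]
    · intro x hx
      rw [norm_mul, hnorm]
      by_cases hxA : |x| ≤ A
      · have he : Real.exp (x * z.im) ≤ Real.exp (A * |z.im|) := by
          apply Real.exp_le_exp.2
          calc x * z.im ≤ |x * z.im| := le_abs_self _
            _ = |x| * |z.im| := abs_mul _ _
            _ ≤ A * |z.im| := by
                apply mul_le_mul_of_nonneg_right hxA (abs_nonneg _)
        exact mul_le_mul (hCf x hx) he (Real.exp_pos _).le hCf0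
      · rw [hfA x (not_le.1 hxA).le]
        simp only [norm_zero, zero_mul]
        exact mul_nonneg hCf0 (Real.exp_pos _).le
  -- integrability of deriv f * (exp - 1)
  have intd : ∀ z : ℂ, Integrable
      (fun x : ℝ => deriv f x * (Complex.exp (-Complex.I * x * z) - 1)) := by
    intro z
    have hδz : (0:ℝ) < (‖z‖ + 1)⁻¹ := by positivity
    obtain ⟨C2, hC20, hC2⟩ := aux_bdd_away hcd hs.deriv hδz
    apply aux_integrable (A := A)
      (C := max (2 * ‖z‖ * Cd) (C2 * (Real.exp (A * |z.im|) + 1)))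
    · exact hmd.mul ((Complex.continuous_exp.comp (hcontinner z)).sub
        continuous_const).aestronglyMeasurable
    · intro x hx; rw [hdA x hx.le, zero_mul]
    · intro x hx
      rcases lt_or_ge |x| ((‖z‖ + 1)⁻¹) with hsmall | hbig
      · have habs0 : ‖-Complex.I * x * z‖ = |x| * ‖z‖ := by
          simp [Complex.norm_real]
        have habs : ‖-Complex.I * x * z‖ ≤ 1 := by
          rw [habs0]
          have hz1 : ‖z‖ ≤ ‖z‖ + 1 := by linarith
          calc |x| * ‖z‖ ≤ (‖z‖ + 1)⁻¹ * (‖z‖ + 1) :=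
                mul_le_mul hsmall.le hz1 (norm_nonneg _) hδz.le
            _ = 1 := by field_simp
        have hexp := Complex.norm_exp_sub_one_le habs
        rw [habs0] at hexp
        rw [norm_mul]
        calc ‖deriv f x‖ * ‖Complex.exp (-Complex.I * x * z) - 1‖
            ≤ ‖deriv f x‖ * (2 * (|x| * ‖z‖)) := by
              apply mul_le_mul_of_nonneg_left _ (norm_nonneg _)
              exact hexp
          _ = 2 * ‖z‖ * (|x| * ‖deriv f x‖) := by ring
          _ ≤ 2 * ‖z‖ * Cd := by
              apply mul_le_mul_of_nonneg_left _ (by positivity)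
              have : |x| * ‖deriv f x‖ = ‖(x:ℂ) * deriv f x‖ := by
                rw [norm_mul, Complex.norm_real, Real.norm_eq_abs]
              rw [this]
              exact hCd x hx
          _ ≤ _ := le_max_left _ _
      · by_cases hxA : |x| ≤ A
        · rw [norm_mul]
          have h1' : ‖deriv f x‖ ≤ C2 := hC2 x hbig
          have h2' : ‖Complex.exp (-Complex.I * x * z) - 1‖ ≤ Real.exp (A * |z.im|) + 1 := by
            calc ‖Complex.exp (-Complex.I * x * z) - 1‖
                ≤ ‖Complex.exp (-Complex.I * x * z)‖ + ‖(1:ℂ)‖ := norm_sub_le _ _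
              _ = Real.exp (x * z.im) + 1 := by rw [hnorm]; norm_num
              _ ≤ Real.exp (A * |z.im|) + 1 := by
                  have : x * z.im ≤ A * |z.im| := by
                    calc x * z.im ≤ |x * z.im| := le_abs_self _
                      _ = |x| * |z.im| := abs_mul _ _
                      _ ≤ A * |z.im| := mul_le_mul_of_nonneg_right hxA (abs_nonneg _)
                  linarith [Real.exp_le_exp.2 this]
          calc ‖deriv f x‖ * ‖Complex.exp (-Complex.I * x * z) - 1‖
              ≤ C2 * (Real.exp (A * |z.im|) + 1) :=
                mul_le_mul h1' h2' (norm_nonneg _) hC20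
            _ ≤ _ := le_max_right _ _
        · rw [hdA x (not_le.1 hxA).le]
          simp only [zero_mul, norm_zero]
          exact le_max_of_le_right (mul_nonneg hC20 (by positivity))
  -- derivative of the exponential factor
  have hderφ : ∀ (z : ℂ) (x : ℝ), HasDerivAt (fun y : ℝ => Complex.exp (-Complex.I * y * z))
      (-(Complex.I * z) * Complex.exp (-Complex.I * x * z)) x := by
    intro z x
    have h0 : HasDerivAt (fun w : ℂ => -Complex.I * w * z) (-Complex.I * z) (x:ℂ) := by
      simpa using ((hasDerivAt_id ((x:ℝ):ℂ)).const_mul (-Complex.I)).mul_const z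
    have h2 := h0.cexp.comp_ofReal
    convert h2 using 1
    ring
  have hder : ∀ (z : ℂ) (x : ℝ), x ≠ 0 →
      HasDerivAt (fun y : ℝ => f y * (Complex.exp (-Complex.I * y * z) - 1))
        (deriv f x * (Complex.exp (-Complex.I * x * z) - 1) +
          f x * (-(Complex.I * z) * Complex.exp (-Complex.I * x * z))) x := by
    intro z x hx
    have hfd : HasDerivAt f (deriv f x) x :=
      ((hf.contDiffAt (isOpen_compl_singleton.mem_nhds hx)).differentiableAt
        one_ne_zero).hasDerivAt
    exact hfd.mul ((hderφ z x).sub_const 1)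
  have intf : Integrable f := aux_integrable hmf (fun x hx => hfA x hx.le) hCf
  -- Part 1 : differentiability
  have part1 : Differentiable ℂ (fun z : ℂ => ∫ x : ℝ, f x * Complex.exp (-Complex.I * x * z)) := by
    intro z₀
    have hball : ∀ z ∈ Metric.ball z₀ 1, ‖z‖ ≤ ‖z₀‖ + 1 := by
      intro z hz
      have hd := mem_ball_iff_norm.1 hz
      calc ‖z‖ = ‖z₀ + (z - z₀)‖ := by ring_nf
        _ ≤ ‖z₀‖ + ‖z - z₀‖ := norm_add_le _ _
        _ ≤ ‖z₀‖ + 1 := by linarith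
    have main := hasDerivAt_integral_of_dominated_loc_of_deriv_le (μ := volume)
      (F := fun (z : ℂ) (x : ℝ) => f x * Complex.exp (-Complex.I * x * z))
      (F' := fun (z : ℂ) (x : ℝ) => f x * (Complex.exp (-Complex.I * x * z) * (-Complex.I * x)))
      (x₀ := z₀) (bound := fun x => ‖f x‖ * (A * Real.exp (A * (‖z₀‖ + 1))))
      (Metric.ball_mem_nhds z₀ one_pos)
      (Eventually.of_forall fun z => (int1 z).aestronglyMeasurable)
      (int1 z₀)
      (hmf.mul ((Complex.continuous_exp.comp (hcontinner z₀)).mul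
        (continuous_const.mul Complex.continuous_ofReal)).aestronglyMeasurable)
      ?_ ((intf.norm).mul_const _) ?_
    · exact main.2.differentiableAt
    · refine Eventually.of_forall fun x => fun z hz => ?_
      rcases eq_or_ne (f x) 0 with h | h
      · simp [h]
      · have hxA := hsupp_f x h
        rw [norm_mul, norm_mul, hnorm]
        have hIx : ‖-Complex.I * (x:ℂ)‖ = |x| := by
          simp [Complex.norm_real]
        rw [hIx]
        have he : Real.exp (x * z.im) ≤ Real.exp (A * (‖z₀‖ + 1)) := by
          apply Real.exp_le_exp.2
          calc x * z.im ≤ |x * z.im| := le_abs_self _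
            _ = |x| * |z.im| := abs_mul _ _
            _ ≤ A * (‖z₀‖ + 1) := by
                apply mul_le_mul hxA _ (abs_nonneg _) hA0.le
                calc |z.im| ≤ ‖z‖ := Complex.abs_im_le_norm z
                  _ = ‖z‖ := rfl
                  _ ≤ ‖z₀‖ + 1 := hball z hz
        calc ‖f x‖ * (Real.exp (x * z.im) * |x|)
            ≤ ‖f x‖ * (Real.exp (A * (‖z₀‖ + 1)) * A) := by
              apply mul_le_mul_of_nonneg_left _ (norm_nonneg _)
              exact mul_le_mul he hxA (abs_nonneg _) (Real.exp_pos _).le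
          _ = ‖f x‖ * (A * Real.exp (A * (‖z₀‖ + 1))) := by ring
    · refine Eventually.of_forall fun x => fun z hz => ?_
      have h0 : HasDerivAt (fun w : ℂ => -Complex.I * (x:ℂ) * w) (-Complex.I * x) z := by
        simpa using (hasDerivAt_id z).const_mul (-Complex.I * (x:ℂ))
      exact HasDerivAt.const_mul (f x) h0.cexp
  refine ⟨part1, ?_⟩
  -- Part 2 : the iz formula
  intro z
  set g1 : ℝ → ℂ := fun x => deriv f x * (Complex.exp (-Complex.I * x * z) - 1) +
    f x * (-(Complex.I * z) * Complex.exp (-Complex.I * x * z)) with hg1def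
  have int3 : Integrable (fun x : ℝ =>
      f x * (-(Complex.I * z) * Complex.exp (-Complex.I * x * z))) := by
    have h := (int1 z).const_mul (-(Complex.I * z))
    refine h.congr (Eventually.of_forall fun x => ?_)
    ring
  have hg1 : Integrable g1 := (intd z).add int3
  -- integral over Ioi 0 vanishes
  have hIoiA : ∫ x in (0:ℝ)..A, g1 x = 0 := by
    have hcont : Continuous (fun ε : ℝ => ∫ x in ε..A, g1 x) := by
      have h := hg1.continuous_primitive A
      have heq : (fun ε : ℝ => ∫ x in ε..A, g1 x) = fun ε : ℝ => -∫ x in A..ε, g1 x := by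
        funext ε; rw [← intervalIntegral.integral_symm]
      rw [heq]; exact h.neg
    have t1 : Tendsto (fun ε : ℝ => ∫ x in ε..A, g1 x) (nhdsWithin 0 (Set.Ioi 0))
        (nhds (∫ x in (0:ℝ)..A, g1 x)) := (hcont.tendsto 0).mono_left nhdsWithin_le_nhds
    obtain ⟨L1, hL1⟩ := h1
    have t2 : Tendsto (fun ε : ℝ => ∫ x in ε..A, g1 x) (nhdsWithin 0 (Set.Ioi 0))
        (nhds (f A * (Complex.exp (-Complex.I * A * z) - 1) -
          L1 * (Complex.exp (-Complex.I * (0:ℝ) * z) - 1))) := by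
      have heq : ∀ᶠ ε in nhdsWithin 0 (Set.Ioi 0), (∫ x in ε..A, g1 x) =
          f A * (Complex.exp (-Complex.I * A * z) - 1) -
          f ε * (Complex.exp (-Complex.I * ε * z) - 1) := by
        filter_upwards [Ioo_mem_nhdsGT_of_mem (Set.left_mem_Ico.2 hA0)] with ε hε
        refine intervalIntegral.integral_eq_sub_of_hasDerivAt
          (f := fun y : ℝ => f y * (Complex.exp (-Complex.I * y * z) - 1))
          (f' := g1) ?_ hg1.intervalIntegrable
        intro x hxm
        rw [Set.uIcc_of_le hε.2.le] at hxm
        exact hder z x (ne_of_gt (lt_of_lt_of_le hε.1 hxm.1))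
      rw [tendsto_congr' heq]
      apply Tendsto.sub tendsto_const_nhds
      refine hL1.mul (Tendsto.mono_left ?_ nhdsWithin_le_nhds)
      have hc : Continuous (fun ε : ℝ => Complex.exp (-Complex.I * ε * z) - 1) :=
        (Complex.continuous_exp.comp (hcontinner z)).sub continuous_const
      exact hc.tendsto 0
    have hu := tendsto_nhds_unique t1 t2
    rw [hu, hfA A (abs_of_nonneg hA0.le).ge]
    simp
  have hIoi : ∫ x in Set.Ioi (0:ℝ), g1 x = 0 := by
    have hIocA : ∫ x in Set.Ioc (0:ℝ) A, g1 x = 0 := by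
      rwa [intervalIntegral.integral_of_le hA0.le] at hIoiA
    have hIoiA' : ∫ x in Set.Ioi A, g1 x = 0 := by
      apply setIntegral_eq_zero_of_forall_eq_zero
      intro x hx
      have hxA : A ≤ |x| := le_trans (le_of_lt hx) (le_abs_self x)
      simp [hg1def, hfA x hxA, hdA x hxA]
    rw [← Set.Ioc_union_Ioi_eq_Ioi hA0.le,
      setIntegral_union (Set.Ioc_disjoint_Ioi le_rfl) measurableSet_Ioi
        hg1.integrableOn hg1.integrableOn, hIocA, hIoiA', add_zero]
  -- integral over Iio 0 vanishes
  have hmA0 : ∫ x in (-A)..(0:ℝ), g1 x = 0 := by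
    have hcont : Continuous (fun ε : ℝ => ∫ x in (-A)..ε, g1 x) :=
      hg1.continuous_primitive (-A)
    have t1 : Tendsto (fun ε : ℝ => ∫ x in (-A)..ε, g1 x) (nhdsWithin 0 (Set.Iio 0))
        (nhds (∫ x in (-A)..(0:ℝ), g1 x)) := (hcont.tendsto 0).mono_left nhdsWithin_le_nhds
    obtain ⟨L2, hL2⟩ := h2
    have t2 : Tendsto (fun ε : ℝ => ∫ x in (-A)..ε, g1 x) (nhdsWithin 0 (Set.Iio 0))
        (nhds (L2 * (Complex.exp (-Complex.I * (0:ℝ) * z) - 1) -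
          f (-A) * (Complex.exp (-Complex.I * ((-A : ℝ) : ℂ) * z) - 1))) := by
      have heq : ∀ᶠ ε in nhdsWithin 0 (Set.Iio 0), (∫ x in (-A)..ε, g1 x) =
          f ε * (Complex.exp (-Complex.I * ε * z) - 1) -
          f (-A) * (Complex.exp (-Complex.I * ((-A : ℝ) : ℂ) * z) - 1) := by
        filter_upwards [Ioo_mem_nhdsLT_of_mem
          (Set.right_mem_Ioc.2 (neg_lt_zero.2 hA0))] with ε hε
        refine intervalIntegral.integral_eq_sub_of_hasDerivAt
          (f := fun y : ℝ => f y * (Complex.exp (-Complex.I * y * z) - 1))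
          (f' := g1) ?_ hg1.intervalIntegrable
        intro x hxm
        rw [Set.uIcc_of_le hε.1.le] at hxm
        exact hder z x (ne_of_lt (lt_of_le_of_lt hxm.2 hε.2))
      rw [tendsto_congr' heq]
      apply Tendsto.sub _ tendsto_const_nhds
      refine hL2.mul (Tendsto.mono_left ?_ nhdsWithin_le_nhds)
      have hc : Continuous (fun ε : ℝ => Complex.exp (-Complex.I * ε * z) - 1) :=
        (Complex.continuous_exp.comp (hcontinner z)).sub continuous_const
      exact hc.tendsto 0
    have hu := tendsto_nhds_unique t1 t2
    rw [hu, hfA (-A) (by rw [abs_neg, abs_of_nonneg hA0.le])]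
    simp
  have hIio : ∫ x in Set.Iio (0:ℝ), g1 x = 0 := by
    have hIocA : ∫ x in Set.Ioc (-A) (0:ℝ), g1 x = 0 := by
      rwa [intervalIntegral.integral_of_le (neg_nonpos.2 hA0.le)] at hmA0
    have hIicA : ∫ x in Set.Iic (-A), g1 x = 0 := by
      apply setIntegral_eq_zero_of_forall_eq_zero
      intro x hx
      have hxA : A ≤ |x| := by
        rw [Set.mem_Iic] at hx
        rw [abs_of_nonpos (hx.trans (neg_nonpos.2 hA0.le))]
        linarith
      simp [hg1def, hfA x hxA, hdA x hxA]
    rw [setIntegral_congr_set Iio_ae_eq_Iic,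
      ← Set.Iic_union_Ioc_eq_Iic (neg_nonpos.2 hA0.le),
      setIntegral_union (Set.Iic_disjoint_Ioc le_rfl) measurableSet_Ioc
        hg1.integrableOn hg1.integrableOn, hIocA, hIicA, add_zero]
  have htot : ∫ x, g1 x = 0 := by
    have hcompl : ∫ x, g1 x = ∫ x in ({(0:ℝ)}ᶜ : Set ℝ), g1 x := by
      rw [show (volume : Measure ℝ).restrict ({(0:ℝ)}ᶜ) = volume by simp]
    rw [hcompl, ← Set.Iio_union_Ioi,
      setIntegral_union ((Set.Iic_disjoint_Ioi le_rfl).mono_left Set.Iio_subset_Iic_self) measurableSet_Ioi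
        hg1.integrableOn hg1.integrableOn, hIio, hIoi, add_zero]
  have hadd : ∫ x, g1 x =
      (∫ x : ℝ, deriv f x * (Complex.exp (-Complex.I * x * z) - 1)) +
      ∫ x : ℝ, f x * (-(Complex.I * z) * Complex.exp (-Complex.I * x * z)) :=
    integral_add (intd z) int3
  have hc : (∫ x : ℝ, f x * (-(Complex.I * z) * Complex.exp (-Complex.I * x * z))) =
      -(Complex.I * z) * ∫ x : ℝ, f x * Complex.exp (-Complex.I * x * z) := by
    rw [← integral_const_mul]
    exact integral_congr_ae (Eventually.of_forall fun x => by ring)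
  rw [htot, hc] at hadd
  linear_combination hadd
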